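/- Let q = 2, k ≥ 1, n = 2^k − 1, and let X = 𝒞 ⊆ 𝔽_2^n be a binary dual Hamming code, i.e., the cyclic code generated by g(x) = (x^n−1)/g⊥(x) for a primitive monic irreducible g⊥ ∈ 𝔽_2[x] of degree k. Then (X, X^inv(t), C) exhibits the cyclic sieving phenomenon, where inv is defined using the order 0 < 1 on 𝔽_2 and C is the cyclic group of order n acting on X by cyclic shifts. -/

import Mathlib

/-- The (leftward) cyclic shift on words of length `n`:
`c(w₁,…,wₙ) = (w₂,…,wₙ,w₁)`. -/
def cshift {A : Type*} {n : ℕ} (w : Fin n → A) : Fin n → A :=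
  fun i => w ⟨((i : ℕ) + 1) % n, Nat.mod_lt _ i.pos⟩

/-- The major index of a word: `maj w = Σ_{1 ≤ i ≤ n-1, w_i > w_{i+1}} i`
(here positions are 0-indexed, so position `i : Fin n` is the `(i+1)`-st letter). -/
def majIdx {A : Type*} [LinearOrder A] {n : ℕ} (w : Fin n → A) : ℕ :=
  ∑ i : Fin n,
    if h : (i : ℕ) + 1 < n then (if w ⟨(i : ℕ) + 1, h⟩ < w i then (i : ℕ) + 1 else 0) else 0

/-- The number of cyclic descents of a word, `cdes w = #{i : w_i > w_{i+1}}`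
with indices read cyclically (`w_{n+1} := w_1`). -/
def cdes {A : Type*} [LinearOrder A] {n : ℕ} (w : Fin n → A) : ℕ :=
  (Finset.univ.filter fun i : Fin n =>
    w ⟨((i : ℕ) + 1) % n, Nat.mod_lt _ i.pos⟩ < w i).card

/-- The inversion number of a word: `inv w = #{(i,j) : i < j, w_i > w_j}`. -/
def invNum {A : Type*} [LinearOrder A] {n : ℕ} (w : Fin n → A) : ℕ :=
  (Finset.univ.filter fun p : Fin n × Fin n => p.1 < p.2 ∧ w p.2 < w p.1).card

/-- The Hamming weight of a binary word: the number of ones. -/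
def wt {n : ℕ} (w : Fin n → Bool) : ℕ :=
  (Finset.univ.filter fun i => w i = true).card

/-- The triple `(X, Σ_{x ∈ X} t^{stat x}, C)` exhibits the cyclic sieving phenomenon,
where `C` is the cyclic group of order `n` generated by the cyclic shift `c` acting on `X`:
for every `d`, the number of fixed points of `c^d` on `X` equals the evaluation of
`Σ_{x ∈ X} t^{stat x}` at `t = ζ^d`, with `ζ = exp(2πi/n)`. -/
def exhibitsCSP {A : Type*} [DecidableEq A] {n : ℕ} (X : Finset (Fin n → A))
    (stat : (Fin n → A) → ℕ) : Prop :=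
  ∀ d : ℕ,
    ((X.filter fun v => cshift^[d] v = v).card : ℂ) =
      ∑ v ∈ X, Complex.exp (2 * (Real.pi : ℂ) * Complex.I / n) ^ (d * stat v)

/-- The polynomial `w₁ + w₂ x + ⋯ + wₙ x^{n-1}` associated to a word `w ∈ F^n` under
the standard identification of `F^n` with `F[x]/(xⁿ-1)`.  A word `w` belongs to the
cyclic code generated by a monic divisor `g` of `xⁿ - 1` exactly when `g ∣ wordPoly w`. -/
noncomputable def wordPoly {F : Type*} [CommRing F] {n : ℕ} (w : Fin n → F) :
    Polynomial F :=
  ∑ i : Fin n, Polynomial.C (w i) * Polynomial.X ^ (i : ℕ)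

/-- The inversion number of a word over F_2 = {0,1} with the order 0 < 1:
inv(w) = #{(i,j) : i < j, w_i = 1 and w_j = 0}. -/
def invF2 {n : ℕ} (w : Fin n → ZMod 2) : ℕ :=
  (Finset.univ.filter fun p : Fin n × Fin n =>
    p.1 < p.2 ∧ w p.1 = 1 ∧ w p.2 = 0).card

open Finset Polynomial

def coeffFn {n : ℕ} (v : Fin n → ZMod 2) : ℕ → ZMod 2 :=
  fun i => if h : i < n then v ⟨i, h⟩ else 0

def invA (n : ℕ) (f : ℕ → ZMod 2) : ℕ :=
  ∑ i ∈ range n, ∑ j ∈ range n, if i < j ∧ f i = 1 ∧ f j = 0 then 1 else 0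

def wtA (n : ℕ) (f : ℕ → ZMod 2) : ℕ :=
  ∑ i ∈ range n, if f i = 1 then 1 else 0

lemma zmod2_cases : ∀ a : ZMod 2, a = 0 ∨ a = 1 := by decide

lemma invA_congr {n : ℕ} {f g : ℕ → ZMod 2} (h : ∀ i < n, f i = g i) :
    invA n f = invA n g := by
  unfold invA
  refine Finset.sum_congr rfl fun i hi => Finset.sum_congr rfl fun j hj => ?_
  rw [h i (mem_range.1 hi), h j (mem_range.1 hj)]

lemma wtA_congr {n : ℕ} {f g : ℕ → ZMod 2} (h : ∀ i < n, f i = g i) :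
    wtA n f = wtA n g := by
  unfold wtA
  exact Finset.sum_congr rfl fun i hi => by rw [h i (mem_range.1 hi)]

lemma invF2_eq_invA {n : ℕ} (v : Fin n → ZMod 2) : invF2 v = invA n (coeffFn v) := by
  unfold invF2 invA
  rw [Finset.card_filter,
    ← Fin.sum_univ_eq_sum_range
      (fun i => ∑ j ∈ range n, if i < j ∧ coeffFn v i = 1 ∧ coeffFn v j = 0 then 1 else 0) n,
    Fintype.sum_prod_type]
  refine Finset.sum_congr rfl fun i _ => ?_
  rw [← Fin.sum_univ_eq_sum_range
      (fun j => if (i : ℕ) < j ∧ coeffFn v i = 1 ∧ coeffFn v j = 0 then 1 else 0) n]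
  refine Finset.sum_congr rfl fun j _ => ?_
  have h1 : coeffFn v (i : ℕ) = v i := by simp [coeffFn]
  have h2 : coeffFn v (j : ℕ) = v j := by simp [coeffFn]
  rw [h1, h2]
  exact if_congr (by rw [Fin.lt_def]) rfl rfl

lemma wtF2_eq_wtA {n : ℕ} (v : Fin n → ZMod 2) :
    (Finset.univ.filter fun i => v i = 1).card = wtA n (coeffFn v) := by
  unfold wtA
  rw [Finset.card_filter,
    ← Fin.sum_univ_eq_sum_range (fun i => if coeffFn v i = 1 then 1 else 0) n]
  refine Finset.sum_congr rfl fun i _ => ?_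
  simp [coeffFn]

lemma cshift_iterate {A : Type*} {n : ℕ} (j : ℕ) (v : Fin n → A) (i : Fin n) :
    cshift^[j] v i = v ⟨((i : ℕ) + j) % n, Nat.mod_lt _ i.pos⟩ := by
  induction j generalizing v with
  | zero => simp only [Function.iterate_zero, id]; congr 1; exact Fin.ext (Nat.mod_eq_of_lt i.isLt).symm
  | succ j ih =>
      rw [Function.iterate_succ_apply, ih (cshift v)]
      show v _ = v _
      congr 1
      exact Fin.ext (by simp only [Nat.mod_add_mod]; ring_nf)

lemma coeffFn_cshift {n : ℕ} (v : Fin n → ZMod 2) (i : ℕ) (h : i < n) :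
    coeffFn (cshift v) i = coeffFn v ((i + 1) % n) := by
  have hn : 0 < n := by omega
  simp only [coeffFn, dif_pos h, dif_pos (Nat.mod_lt (i + 1) hn)]
  rfl

lemma invA_shift (m : ℕ) (f : ℕ → ZMod 2) :
    invA (m + 1) (fun i => f ((i + 1) % (m + 1))) + (if f 0 = 1 then m + 1 else 0)
      = invA (m + 1) f + wtA (m + 1) f := by
  set core : ℕ := ∑ i ∈ Finset.range m, ∑ j ∈ Finset.range m,
      if i < j ∧ f (i + 1) = 1 ∧ f (j + 1) = 0 then 1 else 0 with hcore
  set W : ℕ := ∑ i ∈ Finset.range m, if f (i + 1) = 1 then 1 else 0 with hW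
  set Z : ℕ := ∑ j ∈ Finset.range m, if f (j + 1) = 0 then 1 else 0 with hZ
  have hmod : ∀ i, i < m → (i + 1) % (m + 1) = i + 1 := fun i hi => Nat.mod_eq_of_lt (by omega)
  have hmodm : (m + 1) % (m + 1) = 0 := Nat.mod_self _
  have claim1 : invA (m + 1) (fun i => f ((i + 1) % (m + 1)))
      = core + (if f 0 = 0 then W else 0) := by
    unfold invA
    have inner : ∀ i ∈ Finset.range (m + 1),
        (∑ j ∈ Finset.range (m + 1),
          if i < j ∧ f ((i + 1) % (m + 1)) = 1 ∧ f ((j + 1) % (m + 1)) = 0 then 1 else 0)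
        = (∑ j ∈ Finset.range m,
            if i < j ∧ f ((i + 1) % (m + 1)) = 1 ∧ f (j + 1) = 0 then 1 else 0)
          + (if i < m ∧ f ((i + 1) % (m + 1)) = 1 ∧ f 0 = 0 then 1 else 0) := by
      intro i _
      rw [Finset.sum_range_succ, hmodm]
      congr 1
      exact Finset.sum_congr rfl fun j hj => by rw [hmod j (Finset.mem_range.1 hj)]
    rw [Finset.sum_congr rfl inner, Finset.sum_add_distrib]
    congr 1
    · rw [Finset.sum_range_succ]
      have last0 : (∑ j ∈ Finset.range m,
          if m < j ∧ f ((m + 1) % (m + 1)) = 1 ∧ f (j + 1) = 0 then 1 else 0) = 0 :=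
        Finset.sum_eq_zero fun j hj => by
          rw [if_neg]; rintro ⟨h1, -⟩; exact absurd (Finset.mem_range.1 hj) (by omega)
      rw [last0, add_zero, hcore]
      refine Finset.sum_congr rfl fun i hi => Finset.sum_congr rfl fun j hj => ?_
      rw [hmod i (Finset.mem_range.1 hi)]
    · rw [Finset.sum_range_succ, if_neg (by rintro ⟨h1, -⟩; omega), add_zero]
      rcases zmod2_cases (f 0) with h0 | h0
      · rw [if_pos h0, hW]
        refine Finset.sum_congr rfl fun i hi => ?_
        rw [hmod i (Finset.mem_range.1 hi)]
        simp [Finset.mem_range.1 hi, h0]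
      · rw [if_neg (by rw [h0]; exact one_ne_zero)]
        refine Finset.sum_eq_zero fun i hi => ?_
        rw [if_neg]; rintro ⟨-, -, hc⟩; rw [h0] at hc; exact one_ne_zero hc
  have claim2 : invA (m + 1) f = core + (if f 0 = 1 then Z else 0) := by
    unfold invA
    rw [Finset.sum_range_succ']
    congr 1
    · rw [hcore]
      refine Finset.sum_congr rfl fun i hi => ?_
      rw [Finset.sum_range_succ']
      rw [if_neg (by rintro ⟨h1, -⟩; omega), add_zero]
      refine Finset.sum_congr rfl fun j hj => ?_
      exact if_congr (by constructor <;> rintro ⟨h1, h2⟩ <;> exact ⟨by omega, h2⟩) rfl rfl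
    · rw [Finset.sum_range_succ']
      rw [if_neg (by rintro ⟨h1, -⟩; omega), add_zero]
      rcases zmod2_cases (f 0) with h0 | h0
      · rw [if_neg (by rw [h0]; exact zero_ne_one)]
        refine Finset.sum_eq_zero fun j hj => ?_
        rw [if_neg]; rintro ⟨-, hc, -⟩; rw [h0] at hc; exact zero_ne_one hc
      · rw [if_pos h0, hZ]
        refine Finset.sum_congr rfl fun j hj => ?_
        simp [h0]
  have claim3 : wtA (m + 1) f = W + (if f 0 = 1 then 1 else 0) := by
    unfold wtA
    rw [Finset.sum_range_succ']
  have claim4 : Z + W = m := by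
    rw [hZ, hW, ← Finset.sum_add_distrib]
    have h1 : ∀ j ∈ Finset.range m,
        ((if f (j + 1) = 0 then 1 else 0) + if f (j + 1) = 1 then 1 else 0) = 1 := fun j _ => by
      rcases zmod2_cases (f (j + 1)) with h | h <;> simp [h]
    rw [Finset.sum_congr rfl h1, Finset.sum_const, Finset.card_range, smul_eq_mul, mul_one]
  rw [claim1, claim2, claim3]
  rcases zmod2_cases (f 0) with h0 | h0
  · rw [if_pos h0, if_neg (by rw [h0]; exact zero_ne_one), if_neg (by rw [h0]; exact zero_ne_one),
      if_neg (by rw [h0]; exact zero_ne_one)]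
    omega
  · rw [if_neg (by rw [h0]; exact one_ne_zero), if_pos h0, if_pos h0, if_pos h0]
    omega

lemma wtA_shift (m : ℕ) (f : ℕ → ZMod 2) :
    wtA (m + 1) (fun i => f ((i + 1) % (m + 1))) = wtA (m + 1) f := by
  unfold wtA
  rw [Finset.sum_range_succ, Finset.sum_range_succ']
  simp only [Nat.mod_self]
  congr 1
  refine Finset.sum_congr rfl fun i hi => ?_
  exact if_congr (by rw [Nat.mod_eq_of_lt (by have := Finset.mem_range.1 hi; omega : i + 1 < m + 1)]) rfl rfl

lemma invF2_cshift_step {n : ℕ} (hn : 0 < n) (v : Fin n → ZMod 2) :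
    invF2 (cshift v) ≡ invF2 v + wtA n (coeffFn v) [MOD n] := by
  obtain ⟨m, rfl⟩ : ∃ m, n = m + 1 := ⟨n - 1, by omega⟩
  have key : invF2 (cshift v) = invA (m + 1) (fun i => coeffFn v ((i + 1) % (m + 1))) := by
    rw [invF2_eq_invA]
    exact invA_congr fun i hi => coeffFn_cshift v i hi
  have h := invA_shift m (coeffFn v)
  rw [← key, ← invF2_eq_invA] at h
  rcases zmod2_cases (coeffFn v 0) with h0 | h0
  · rw [if_neg (by rw [h0]; exact zero_ne_one), add_zero] at h
    rw [h]
  · rw [if_pos h0] at h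
    show invF2 (cshift v) % (m + 1) = (invF2 v + wtA (m + 1) (coeffFn v)) % (m + 1)
    rw [← h, Nat.add_mod_right]

lemma wtA_cshift {n : ℕ} (hn : 0 < n) (v : Fin n → ZMod 2) :
    wtA n (coeffFn (cshift v)) = wtA n (coeffFn v) := by
  obtain ⟨m, rfl⟩ : ∃ m, n = m + 1 := ⟨n - 1, by omega⟩
  rw [wtA_congr fun i hi => coeffFn_cshift v i hi]
  exact wtA_shift m (coeffFn v)

lemma invF2_iter {n : ℕ} (hn : 0 < n) (v : Fin n → ZMod 2) (j : ℕ) :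
    invF2 (cshift^[j] v) ≡ invF2 v + j * wtA n (coeffFn v) [MOD n] ∧
      wtA n (coeffFn (cshift^[j] v)) = wtA n (coeffFn v) := by
  induction j with
  | zero => simpa using Nat.ModEq.refl _
  | succ j ih =>
      rw [Function.iterate_succ_apply']
      refine ⟨?_, by rw [wtA_cshift hn _, ih.2]⟩
      calc invF2 (cshift (cshift^[j] v))
          ≡ invF2 (cshift^[j] v) + wtA (n) (coeffFn (cshift^[j] v)) [MOD n] :=
            invF2_cshift_step hn _
        _ = invF2 (cshift^[j] v) + wtA n (coeffFn v) := by rw [ih.2]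
        _ ≡ (invF2 v + j * wtA n (coeffFn v)) + wtA n (coeffFn v) [MOD n] :=
            Nat.ModEq.add_right _ ih.1
        _ = invF2 v + (j + 1) * wtA n (coeffFn v) := by ring

lemma wordPoly_coeff {n : ℕ} (v : Fin n → ZMod 2) (i : ℕ) :
    (wordPoly v).coeff i = coeffFn v i := by
  unfold wordPoly
  rw [Polynomial.finset_sum_coeff]
  simp only [Polynomial.coeff_C_mul, Polynomial.coeff_X_pow]
  by_cases h : i < n
  · rw [Finset.sum_eq_single (⟨i, h⟩ : Fin n)]
    · simp [coeffFn, h]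
    · intro b _ hb
      rw [if_neg, mul_zero]
      exact fun hc => hb (Fin.ext hc.symm)
    · intro hc; exact absurd (Finset.mem_univ _) hc
  · rw [Finset.sum_eq_zero, coeffFn, dif_neg h]
    intro b _
    rw [if_neg, mul_zero]
    exact fun hc => h (hc ▸ b.isLt)

lemma wordPoly_inj {n : ℕ} {v u : Fin n → ZMod 2} (h : wordPoly v = wordPoly u) : v = u := by
  funext i
  have := congrArg (fun p => Polynomial.coeff p (i : ℕ)) h
  simp only [wordPoly_coeff, coeffFn, dif_pos i.isLt, Fin.eta] at this
  exact this

lemma wordPoly_degree_lt {n : ℕ} (v : Fin n → ZMod 2) : (wordPoly v).degree < n := by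
  unfold wordPoly
  refine lt_of_le_of_lt (Polynomial.degree_sum_le _ _) ?_
  rw [Finset.sup_lt_iff (by exact_mod_cast WithBot.bot_lt_coe n)]
  intro i _
  exact lt_of_le_of_lt (Polynomial.degree_C_mul_X_pow_le _ _) (by exact_mod_cast i.isLt)

lemma wordPoly_zero {n : ℕ} : wordPoly (fun _ : Fin n => (0 : ZMod 2)) = 0 := by
  unfold wordPoly; simp

lemma wordPoly_add {n : ℕ} (v u : Fin n → ZMod 2) :
    wordPoly (v + u) = wordPoly v + wordPoly u := by
  unfold wordPoly
  rw [← Finset.sum_add_distrib]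
  refine Finset.sum_congr rfl fun i _ => ?_
  simp [map_add]; ring

lemma wordPoly_eq_sum_range {n : ℕ} (v : Fin n → ZMod 2) :
    wordPoly v = ∑ i ∈ range n, Polynomial.C (coeffFn v i) * Polynomial.X ^ i := by
  unfold wordPoly
  rw [← Fin.sum_univ_eq_sum_range (fun i => Polynomial.C (coeffFn v i) * Polynomial.X ^ i) n]
  refine Finset.sum_congr rfl fun i _ => ?_
  simp [coeffFn]

lemma eq_of_congr_deg_lt {n : ℕ} (hn : 0 < n) {p q : Polynomial (ZMod 2)}
    (hp : p.degree < n) (hq : q.degree < n)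
    (h : (Polynomial.X ^ n - 1 : Polynomial (ZMod 2)) ∣ p - q) : p = q := by
  have hdeg : (Polynomial.X ^ n - 1 : Polynomial (ZMod 2)).degree = n := by
    have := Polynomial.degree_X_pow_sub_C (R := ZMod 2) hn (1 : ZMod 2)
    simpa using this
  have : p - q = 0 := Polynomial.eq_zero_of_dvd_of_degree_lt h
    (by rw [hdeg]; exact lt_of_le_of_lt (Polynomial.degree_sub_le _ _) (max_lt hp hq))
  exact sub_eq_zero.1 this

lemma shift_identity {n : ℕ} (hn : 0 < n) (v : Fin n → ZMod 2) :
    Polynomial.X * wordPoly (cshift v)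
      = wordPoly v + Polynomial.C (coeffFn v 0) * (Polynomial.X ^ n - 1) := by
  obtain ⟨m, rfl⟩ : ∃ m, n = m + 1 := ⟨n - 1, by omega⟩
  have L : Polynomial.X * wordPoly (cshift v)
      = (∑ i ∈ range m, Polynomial.C (coeffFn v (i + 1)) * Polynomial.X ^ (i + 1))
        + Polynomial.C (coeffFn v 0) * Polynomial.X ^ (m + 1) := by
    rw [wordPoly_eq_sum_range, Finset.mul_sum, Finset.sum_range_succ]
    congr 1
    · refine Finset.sum_congr rfl fun i hi => ?_
      rw [coeffFn_cshift v i (by have := Finset.mem_range.1 hi; omega),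
        Nat.mod_eq_of_lt (by have := Finset.mem_range.1 hi; omega)]
      ring
    · rw [coeffFn_cshift v m (by omega), Nat.mod_self]
      ring
  have R : wordPoly v
      = Polynomial.C (coeffFn v 0)
        + ∑ i ∈ range m, Polynomial.C (coeffFn v (i + 1)) * Polynomial.X ^ (i + 1) := by
    rw [wordPoly_eq_sum_range, Finset.sum_range_succ']
    rw [pow_zero, mul_one, add_comm]
  rw [L, R]
  ring

lemma shift_iter_dvd {n : ℕ} (hn : 0 < n) (v : Fin n → ZMod 2) (d : ℕ) :
    (Polynomial.X ^ n - 1 : Polynomial (ZMod 2))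
      ∣ Polynomial.X ^ d * wordPoly (cshift^[d] v) - wordPoly v := by
  induction d with
  | zero => simp
  | succ d ih =>
      have h1 := shift_identity hn (cshift^[d] v)
      have h3 : Polynomial.X ^ (d + 1) * wordPoly (cshift^[d+1] v) - wordPoly v
          = (Polynomial.X ^ d * wordPoly (cshift^[d] v) - wordPoly v)
            + (Polynomial.X ^ n - 1)
              * (Polynomial.X ^ d * Polynomial.C (coeffFn (cshift^[d] v) 0)) := by
        rw [Function.iterate_succ_apply', pow_succ, mul_assoc, h1]
        ring
      rw [h3]
      exact dvd_add ih (dvd_mul_right _ _)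

section Main

open Finset Polynomial

lemma zmod2_add_self : ∀ a : ZMod 2, a + a = 0 := by decide

lemma isCoprime_X_of_coeff_zero' {p : Polynomial (ZMod 2)} (h : p.coeff 0 = 1) :
    IsCoprime (Polynomial.X : Polynomial (ZMod 2)) p := by
  refine ⟨-p.divX, 1, ?_⟩
  have h2 : Polynomial.X * p.divX + 1 = p := by
    rw [← Polynomial.C_1, ← h]
    exact Polynomial.X_mul_divX_add p
  linear_combination -h2

lemma exists_root_pow (gperp : Polynomial (ZMod 2)) (hirr : Irreducible gperp)
    (hmonic : gperp.Monic) (k n : ℕ) (hdeg : gperp.natDegree = k) (hn : 0 < n)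
    (hprim : orderOf (AdjoinRoot.root gperp) = n) (hcard : n = 2 ^ k - 1) :
    ∀ y : AdjoinRoot gperp, y ≠ 0 → ∃ m, m < n ∧ (AdjoinRoot.root gperp) ^ m = y := by
  haveI : Fact (Irreducible gperp) := ⟨hirr⟩
  set F := AdjoinRoot gperp
  set r : F := AdjoinRoot.root gperp with hr
  have hgne : gperp ≠ 0 := hmonic.ne_zero
  set pb := AdjoinRoot.powerBasis hgne with hpb
  have hdim : pb.dim = k := by rw [AdjoinRoot.powerBasis_dim, hdeg]
  haveI : Fintype F := Fintype.ofEquiv _ pb.basis.equivFun.toEquiv.symm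
  have hcardF : Fintype.card F = 2 ^ k := by
    rw [Fintype.card_congr pb.basis.equivFun.toEquiv]
    simp [hdim]
  have hrn : r ^ n = 1 := by rw [← hprim]; exact pow_orderOf_eq_one r
  have hrne : r ≠ 0 := by
    intro h0
    rw [h0, zero_pow hn.ne'] at hrn
    exact zero_ne_one hrn
  have hu : IsUnit r := hrne.isUnit
  set u : Fˣ := hu.unit with hu'
  have huc : (u : F) = r := hu.unit_spec
  have hord : orderOf u = n := by rw [← orderOf_units, huc, hprim]
  have hcardU : Fintype.card Fˣ = n := by rw [Fintype.card_units, hcardF, hcard]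
  have htop : Subgroup.zpowers u = ⊤ := by
    apply Subgroup.eq_top_of_card_eq
    rw [Nat.card_zpowers, hord, Nat.card_eq_fintype_card, hcardU]
  intro y hy
  have hyu : IsUnit y := hy.isUnit
  have hmem : hyu.unit ∈ Subgroup.zpowers u := htop ▸ Subgroup.mem_top _
  rw [← mem_powers_iff_mem_zpowers] at hmem
  obtain ⟨m, hm⟩ := hmem
  refine ⟨m % n, Nat.mod_lt _ hn, ?_⟩
  have h2 : r ^ m = y := by
    have h3 := congrArg (Units.val) hm
    rw [Units.val_pow_eq_pow_val, huc, hyu.unit_spec] at h3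
    exact h3
  rw [← h2]
  calc r ^ (m % n) = r ^ (n * (m / n) + m % n) := by
        rw [pow_add, pow_mul, hrn, one_pow, one_mul]
    _ = r ^ m := by rw [Nat.div_add_mod]

end Main


lemma wordPoly_zero0 {n : ℕ} : wordPoly (0 : Fin n → ZMod 2) = 0 := by
  unfold wordPoly; simp

/-- for X = C a binary dual Hamming code of dimension k ≥ 1 and length
n = 2^k - 1 (the cyclic code over F_2 generated by g = (x^n-1)/gperp with gperp
primitive monic irreducible of degree k), the triple (X, X^inv(t), C) exhibits the
cyclic sieving phenomenon, with inv defined using the order 0 < 1 on F_2. -/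
theorem stmt19 (k : ℕ) (hk : 1 ≤ k) (n : ℕ) (hn : n = 2 ^ k - 1)
    (gperp : Polynomial (ZMod 2)) (hmonic : gperp.Monic) (hirr : Irreducible gperp)
    (hdeg : gperp.natDegree = k)
    (hprim : orderOf (AdjoinRoot.root gperp) = n)
    (g : Polynomial (ZMod 2)) (hg : g * gperp = Polynomial.X ^ n - 1)
    (X : Finset (Fin n → ZMod 2)) (hX : ∀ v : Fin n → ZMod 2, v ∈ X ↔ g ∣ wordPoly v) :
    exhibitsCSP X invF2 := by
  classical
  have hk2 : 1 < 2 ^ k := Nat.one_lt_two_pow_iff.2 (by omega)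
  have hn0 : 0 < n := by omega
  have hkn : k ≤ n := by have := @Nat.lt_two_pow_self k; omega
  haveI : Fact (Irreducible gperp) := ⟨hirr⟩
  have hgperpne : gperp ≠ 0 := hmonic.ne_zero
  have hXn_deg : (Polynomial.X ^ n - 1 : Polynomial (ZMod 2)).degree = n := by
    simpa using Polynomial.degree_X_pow_sub_C hn0 (1 : ZMod 2)
  have hXn_ne : (Polynomial.X ^ n - 1 : Polynomial (ZMod 2)) ≠ 0 := by
    intro h; rw [h] at hXn_deg
    exact absurd hXn_deg.symm (by simp)
  have hgne : g ≠ 0 := by rintro rfl; rw [zero_mul] at hg; exact hXn_ne hg.symm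
  have hgdeg : g.natDegree = n - k := by
    have h1 : g.natDegree + gperp.natDegree = n := by
      rw [← Polynomial.natDegree_mul hgne hgperpne, hg]
      simpa using Polynomial.natDegree_X_pow_sub_C (R := ZMod 2) (n := n) (r := 1)
    omega
  have hgdeg' : g.degree < n := by
    rw [Polynomial.degree_eq_natDegree hgne]
    exact_mod_cast (by omega : g.natDegree < n)
  have hXn_coeff0 : (Polynomial.X ^ n - 1 : Polynomial (ZMod 2)).coeff 0 = 1 := by
    rw [Polynomial.coeff_sub, Polynomial.coeff_X_pow, if_neg (by omega), Polynomial.coeff_one,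
      if_pos rfl]
    decide
  have hg0 : g.coeff 0 = 1 := by
    have h1 : g.coeff 0 * gperp.coeff 0 = 1 := by
      rw [← Polynomial.mul_coeff_zero, hg, hXn_coeff0]
    rcases zmod2_cases (g.coeff 0) with h | h
    · rw [h, zero_mul] at h1; exact absurd h1 zero_ne_one
    · exact h
  have hcopXg : IsCoprime (Polynomial.X : Polynomial (ZMod 2)) g :=
    isCoprime_X_of_coeff_zero' hg0
  have hcopXn : IsCoprime (Polynomial.X : Polynomial (ZMod 2)) (Polynomial.X ^ n - 1) :=
    isCoprime_X_of_coeff_zero' hXn_coeff0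
  have hgdvdXn : g ∣ (Polynomial.X ^ n - 1 : Polynomial (ZMod 2)) := ⟨gperp, hg.symm⟩
  have hshiftmem : ∀ v, v ∈ X → cshift v ∈ X := by
    intro v hv
    rw [hX] at hv ⊢
    have h1 : g ∣ Polynomial.X * wordPoly (cshift v) := by
      rw [shift_identity hn0 v]
      exact dvd_add hv (Dvd.dvd.mul_left hgdvdXn _)
    exact hcopXg.symm.dvd_of_dvd_mul_left h1
  have h0mem : (0 : Fin n → ZMod 2) ∈ X := by
    rw [hX, wordPoly_zero0]; exact dvd_zero g
  set w0 : Fin n → ZMod 2 := fun i => g.coeff (i : ℕ) with hw0def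
  have hw0poly : wordPoly w0 = g := by
    apply Polynomial.ext; intro i
    rw [wordPoly_coeff]
    unfold coeffFn
    split
    · rfl
    · next h => exact (Polynomial.coeff_eq_zero_of_natDegree_lt (by omega)).symm
  set e : ℕ → (Fin n → ZMod 2) := fun j => cshift^[j] w0 with hedef
  have hemem : ∀ j, e j ∈ X := by
    intro j; induction j with
    | zero =>
        show w0 ∈ X
        rw [hX, hw0poly]
    | succ j ih =>
        show cshift^[j+1] w0 ∈ X
        rw [Function.iterate_succ_apply']
        exact hshiftmem _ ih
  have hD : ∀ j, (Polynomial.X ^ n - 1 : Polynomial (ZMod 2))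
      ∣ Polynomial.X ^ j * wordPoly (e j) - g := by
    intro j; have h1 := shift_iter_dvd hn0 w0 j; rwa [hw0poly] at h1
  set r := AdjoinRoot.root gperp with hrdef
  have hrn : r ^ n = 1 := by rw [← hprim]; exact pow_orderOf_eq_one r
  have hrne : r ≠ 0 := by
    intro h0; rw [h0, zero_pow hn0.ne'] at hrn; exact zero_ne_one hrn
  have hmk : ∀ p : Polynomial (ZMod 2), AdjoinRoot.mk gperp p = 0 ↔ gperp ∣ p :=
    fun p => AdjoinRoot.mk_eq_zero
  have hinj : ∀ j1, j1 < n → ∀ j2, j2 < n → e j1 = e j2 → j1 = j2 := by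
    suffices H : ∀ j1 j2, j1 ≤ j2 → j2 < n → e j1 = e j2 → j1 = j2 by
      intro j1 h1 j2 h2 he
      rcases le_total j1 j2 with h | h
      · exact H j1 j2 h h2 he
      · exact (H j2 j1 h h1 he.symm).symm
    intro j1 j2 hle h2 he
    have d1 := hD j1; have d2 := hD j2
    rw [he] at d1
    have d3 : (Polynomial.X ^ n - 1 : Polynomial (ZMod 2))
        ∣ g * (Polynomial.X ^ j1 - Polynomial.X ^ j2) := by
      have heq : g * (Polynomial.X ^ j1 - Polynomial.X ^ j2)
          = Polynomial.X ^ j2 * (Polynomial.X ^ j1 * wordPoly (e j2) - g)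
            - Polynomial.X ^ j1 * (Polynomial.X ^ j2 * wordPoly (e j2) - g) := by ring
      rw [heq]; exact dvd_sub (d1.mul_left _) (d2.mul_left _)
    have d4 : gperp ∣ (Polynomial.X ^ j1 - Polynomial.X ^ j2) := by
      rw [← hg] at d3
      exact (mul_dvd_mul_iff_left hgne).1 d3
    have d5 : r ^ j1 = r ^ j2 := by
      have h5 := (hmk _).2 d4
      rw [map_sub, map_pow, map_pow, AdjoinRoot.mk_X] at h5
      exact sub_eq_zero.1 h5
    have d6 : r ^ (j2 - j1) = 1 := by
      have h7 : r ^ (j2 - j1) * r ^ j1 = 1 * r ^ j1 := by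
        rw [← pow_add, Nat.sub_add_cancel hle, one_mul, d5]
      exact mul_right_cancel₀ (pow_ne_zero _ hrne) h7
    have d7 := orderOf_dvd_of_pow_eq_one d6
    rw [hprim] at d7
    have h8 : j2 - j1 = 0 := by
      rcases Nat.eq_zero_or_pos (j2 - j1) with h | h
      · exact h
      · exact absurd (Nat.le_of_dvd h d7) (by omega)
    omega
  have hene : ∀ j, e j ≠ 0 := by
    intro j h0
    have h1 := hD j
    rw [h0, wordPoly_zero0, mul_zero, zero_sub] at h1
    have h2 : (Polynomial.X ^ n - 1 : Polynomial (ZMod 2)) ∣ g := (dvd_neg).1 h1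
    exact hgne (Polynomial.eq_zero_of_dvd_of_degree_lt h2 (by rw [hXn_deg]; exact hgdeg'))
  have hsurj : ∀ v ∈ X, v ≠ 0 → ∃ j, j < n ∧ v = e j := by
    intro v hv hvne
    obtain ⟨h, hh⟩ := (hX v).1 hv
    have hwne : wordPoly v ≠ 0 := fun hc => hvne (wordPoly_inj (by rw [hc, wordPoly_zero0]))
    have hhne : h ≠ 0 := by rintro rfl; rw [mul_zero] at hh; exact hwne hh
    have hhdeg : h.natDegree < k := by
      have h1 : g.natDegree + h.natDegree = (wordPoly v).natDegree := by
        rw [← Polynomial.natDegree_mul hgne hhne, ← hh]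
      have h2 : (wordPoly v).natDegree < n := by
        have h3 := wordPoly_degree_lt v
        rwa [Polynomial.degree_eq_natDegree hwne, Nat.cast_lt] at h3
      omega
    have hmkh : AdjoinRoot.mk gperp h ≠ 0 := by
      intro hc
      have hdvd := (hmk h).1 hc
      refine hhne (Polynomial.eq_zero_of_dvd_of_degree_lt hdvd ?_)
      rw [Polynomial.degree_eq_natDegree hhne, Polynomial.degree_eq_natDegree hgperpne, hdeg]
      exact_mod_cast hhdeg
    obtain ⟨m, hm, hrm⟩ := exists_root_pow gperp hirr hmonic k n hdeg hn0 hprim hn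
      (AdjoinRoot.mk gperp h) hmkh
    set j := (n - m) % n with hj
    have hjn : j < n := Nat.mod_lt _ hn0
    have hjm : r ^ (j + m) = 1 := by
      rcases Nat.eq_zero_or_pos m with h0 | h0
      · have hj0 : j + m = 0 := by rw [hj, h0]; simp
        rw [hj0, pow_zero]
      · have hj0 : j + m = n := by
          rw [hj, Nat.mod_eq_of_lt (by omega)]
          omega
        rw [hj0]; exact hrn
    have hdvd1 : gperp ∣ Polynomial.X ^ j * h - 1 := by
      apply (hmk _).1
      rw [map_sub, map_mul, map_pow, AdjoinRoot.mk_X, map_one, ← hrm, ← hrdef, ← pow_add,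
        hjm, sub_self]
    have hdvd2 : (Polynomial.X ^ n - 1 : Polynomial (ZMod 2))
        ∣ Polynomial.X ^ j * wordPoly v - g := by
      obtain ⟨t, ht⟩ := hdvd1
      refine ⟨t, ?_⟩
      rw [← hg]
      calc Polynomial.X ^ j * wordPoly v - g
          = g * (Polynomial.X ^ j * h - 1) := by rw [hh]; ring
        _ = g * (gperp * t) := by rw [ht]
        _ = g * gperp * t := by ring
    have hdvd3 : (Polynomial.X ^ n - 1 : Polynomial (ZMod 2))
        ∣ Polynomial.X ^ j * (wordPoly v - wordPoly (e j)) := by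
      have heq : Polynomial.X ^ j * (wordPoly v - wordPoly (e j))
          = (Polynomial.X ^ j * wordPoly v - g) - (Polynomial.X ^ j * wordPoly (e j) - g) := by
        ring
      rw [heq]; exact dvd_sub hdvd2 (hD j)
    have hdvd4 : (Polynomial.X ^ n - 1 : Polynomial (ZMod 2))
        ∣ (wordPoly v - wordPoly (e j)) :=
      (hcopXn.pow_left).symm.dvd_of_dvd_mul_left hdvd3
    exact ⟨j, hjn, wordPoly_inj
      (eq_of_congr_deg_lt hn0 (wordPoly_degree_lt v) (wordPoly_degree_lt (e j)) hdvd4)⟩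
  have hfix : ∀ d, ¬ (n ∣ d) → ∀ v ∈ X, cshift^[d] v = v → v = 0 := by
    intro d hd v hv hfx
    obtain ⟨h, hh⟩ := (hX v).1 hv
    have h1 := shift_iter_dvd hn0 v d
    rw [hfx] at h1
    have h2 : (Polynomial.X ^ n - 1 : Polynomial (ZMod 2))
        ∣ g * (h * (Polynomial.X ^ d - 1)) := by
      have heq : g * (h * (Polynomial.X ^ d - 1))
          = Polynomial.X ^ d * wordPoly v - wordPoly v := by rw [hh]; ring
      rw [heq]; exact h1
    rw [← hg] at h2
    have h3 : gperp ∣ h * (Polynomial.X ^ d - 1) := (mul_dvd_mul_iff_left hgne).1 h2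
    have h4 : AdjoinRoot.mk gperp h * (r ^ d - 1) = 0 := by
      have h5 := (hmk _).2 h3
      rwa [map_mul, map_sub, map_pow, AdjoinRoot.mk_X, map_one] at h5
    have h5 : r ^ d - 1 ≠ 0 := by
      intro hc
      exact hd (hprim ▸ orderOf_dvd_of_pow_eq_one (sub_eq_zero.1 hc))
    have h6 : AdjoinRoot.mk gperp h = 0 := by
      rcases mul_eq_zero.1 h4 with h' | h'
      · exact h'
      · exact absurd h' h5
    have h8 : (Polynomial.X ^ n - 1 : Polynomial (ZMod 2)) ∣ wordPoly v := by
      rw [← hg, hh]; exact mul_dvd_mul_left g ((hmk _).1 h6)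
    have h9 : wordPoly v = 0 := Polynomial.eq_zero_of_dvd_of_degree_lt h8
      (by rw [hXn_deg]; exact wordPoly_degree_lt v)
    exact wordPoly_inj (by rw [h9, wordPoly_zero0])
  have hXeq : X = insert 0 ((Finset.range n).image e) := by
    ext v
    simp only [Finset.mem_insert, Finset.mem_image, Finset.mem_range]
    constructor
    · intro hv
      by_cases h0 : v = 0
      · exact Or.inl h0
      · obtain ⟨j, hj, hej⟩ := hsurj v hv h0; exact Or.inr ⟨j, hj, hej.symm⟩
    · rintro (rfl | ⟨j, hj, rfl⟩)
      · exact h0mem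
      · exact hemem j
  have h0notin : (0 : Fin n → ZMod 2) ∉ (Finset.range n).image e := by
    simp only [Finset.mem_image, Finset.mem_range]
    rintro ⟨j, hj, hej⟩
    exact hene j hej
  have hinjon : ∀ a ∈ Finset.range n, ∀ b ∈ Finset.range n, e a = e b → a = b :=
    fun a ha b hb hab => hinj a (Finset.mem_range.1 ha) b (Finset.mem_range.1 hb) hab
  have hcardim : ((Finset.range n).image e).card = n := by
    rw [Finset.card_image_of_injOn fun a ha b hb hab =>
      hinjon a ha b hb hab, Finset.card_range]
  have hcardX : X.card = n + 1 := by
    rw [hXeq, Finset.card_insert_of_notMem h0notin, hcardim]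
  set w1 : ℕ := wtA n (coeffFn w0) with hw1
  have hwte : ∀ j, wtA n (coeffFn (e j)) = w1 := fun j => (invF2_iter hn0 w0 j).2
  have hcol : ∀ i : Fin n, 2 * (X.filter fun v => v i = 1).card = X.card := by
    intro i
    have hlead : g.coeff (n - k) = 1 := by
      have h1 : g.coeff (n - k) ≠ 0 := by
        rw [← hgdeg]
        exact Polynomial.leadingCoeff_ne_zero.2 hgne
      rcases zmod2_cases (g.coeff (n - k)) with h | h
      · exact absurd h h1
      · exact h
    set j0 := n - k + n - (i : ℕ) with hj0
    have hv0 : (e j0) i = 1 := by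
      show cshift^[j0] w0 i = 1
      rw [cshift_iterate]
      have hi := i.isLt
      have harith : ((i : ℕ) + j0) % n = n - k := by
        have heq1 : (i : ℕ) + j0 = (n - k) + n := by omega
        rw [heq1, Nat.add_mod_right, Nat.mod_eq_of_lt (by omega)]
      show g.coeff (((i : ℕ) + j0) % n) = 1
      rw [harith, hlead]
    have hv0mem := hemem j0
    have hsplit := Finset.card_filter_add_card_filter_not
      (s := X) (p := fun v => v i = 1)
    have hbij : (X.filter fun v => v i = 1).card
        = (X.filter fun v => ¬ (v i = 1)).card := by
      apply Finset.card_bij' (i := fun v _ => v + e j0) (j := fun v _ => v + e j0)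
      · intro v hv
        rw [Finset.mem_filter] at hv ⊢
        refine ⟨?_, ?_⟩
        · rw [hX, wordPoly_add]
          exact dvd_add ((hX v).1 hv.1) ((hX _).1 hv0mem)
        · rw [Pi.add_apply, hv.2, hv0]; decide
      · intro v hv
        rw [Finset.mem_filter] at hv ⊢
        refine ⟨?_, ?_⟩
        · rw [hX, wordPoly_add]
          exact dvd_add ((hX v).1 hv.1) ((hX _).1 hv0mem)
        · rw [Pi.add_apply, hv0]
          rcases zmod2_cases (v i) with h | h
          · rw [h]; decide
          · exact absurd h hv.2
      · intro v hv
        funext x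
        show v x + (e j0) x + (e j0) x = v x
        rw [add_assoc, zmod2_add_self, add_zero]
      · intro v hv
        funext x
        show v x + (e j0) x + (e j0) x = v x
        rw [add_assoc, zmod2_add_self, add_zero]
    rw [← hsplit, ← hbij, two_mul]
  have hsum1 : ∑ v ∈ X, wtA n (coeffFn v) = n * w1 := by
    rw [hXeq, Finset.sum_insert h0notin, Finset.sum_image hinjon]
    have hz : wtA n (coeffFn (0 : Fin n → ZMod 2)) = 0 := by
      refine Finset.sum_eq_zero fun i hi => ?_
      have hc0 : coeffFn (0 : Fin n → ZMod 2) i = 0 := by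
        unfold coeffFn; split <;> rfl
      rw [hc0, if_neg (fun hc => zero_ne_one hc)]
    rw [hz, zero_add, Finset.sum_congr rfl fun j _ => hwte j, Finset.sum_const,
      Finset.card_range, smul_eq_mul]
  have hsum2 : 2 * ∑ v ∈ X, wtA n (coeffFn v) = n * (n + 1) := by
    have hswap : ∑ v ∈ X, wtA n (coeffFn v)
        = ∑ i ∈ Finset.range n, ∑ v ∈ X, (if coeffFn v i = 1 then 1 else 0) := by
      unfold wtA; rw [Finset.sum_comm]
    rw [hswap, Finset.mul_sum]
    have hterm : ∀ i ∈ Finset.range n,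
        2 * (∑ v ∈ X, if coeffFn v i = 1 then 1 else 0) = n + 1 := by
      intro i hi
      have hi' := Finset.mem_range.1 hi
      have heq : (∑ v ∈ X, if coeffFn v i = 1 then 1 else 0)
          = (X.filter fun v => v ⟨i, hi'⟩ = 1).card := by
        rw [Finset.card_filter]
        refine Finset.sum_congr rfl fun v hv => ?_
        refine if_congr ?_ rfl rfl
        unfold coeffFn
        rw [dif_pos hi']
      rw [heq, hcol ⟨i, hi'⟩, hcardX]
    rw [Finset.sum_congr rfl hterm, Finset.sum_const, Finset.card_range, smul_eq_mul]
  have h2w1 : 2 * w1 = n + 1 := by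
    have hmm : 2 * (n * w1) = n * (n + 1) := by rw [← hsum1]; exact hsum2
    have hmm2 : n * (2 * w1) = n * (n + 1) := by rw [← hmm]; ring
    exact Nat.eq_of_mul_eq_mul_left hn0 hmm2
  have hcop : Nat.Coprime n w1 := by
    have hd1 : Nat.gcd n w1 ∣ n := Nat.gcd_dvd_left _ _
    have hd2 : Nat.gcd n w1 ∣ n + 1 := by
      rw [← h2w1]
      exact (Nat.gcd_dvd_right n w1).mul_left 2
    have hd3 : Nat.gcd n w1 ∣ 1 := by simpa using Nat.dvd_sub hd2 hd1
    exact Nat.dvd_one.1 hd3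
  intro d
  set ζ : ℂ := Complex.exp (2 * (Real.pi : ℂ) * Complex.I / n) with hζ
  have hnC : (n : ℂ) ≠ 0 := Nat.cast_ne_zero.2 hn0.ne'
  have hζn : ζ ^ n = 1 := by
    rw [hζ, ← Complex.exp_nat_mul]
    rw [show (n : ℂ) * (2 * (Real.pi : ℂ) * Complex.I / n)
      = 2 * (Real.pi : ℂ) * Complex.I from by field_simp]
    exact Complex.exp_two_pi_mul_I
  have hζmod : ∀ a b : ℕ, a ≡ b [MOD n] → ζ ^ a = ζ ^ b := by
    intro a b hab
    have key : ∀ c : ℕ, ζ ^ c = ζ ^ (c % n) := by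
      intro c
      conv_lhs => rw [← Nat.div_add_mod c n]
      rw [pow_add, pow_mul, hζn, one_pow, one_mul]
    rw [key a, key b, hab]
  have hζprim : IsPrimitiveRoot ζ n := Complex.isPrimitiveRoot_exp n hn0.ne'
  by_cases hd : n ∣ d
  · have hfil : X.filter (fun v => cshift^[d] v = v) = X := by
      apply Finset.filter_true_of_mem
      intro v _
      funext i
      rw [cshift_iterate]
      congr 1
      apply Fin.ext
      obtain ⟨t, rfl⟩ := hd
      show ((i : ℕ) + n * t) % n = (i : ℕ)
      rw [Nat.add_mul_mod_self_left, Nat.mod_eq_of_lt i.isLt]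
    rw [hfil]
    have hone : ∀ v ∈ X, ζ ^ (d * invF2 v) = 1 := by
      intro v _
      rw [hζmod (d * invF2 v) 0 (Nat.modEq_zero_iff_dvd.2 (hd.mul_right _)), pow_zero]
    rw [Finset.sum_congr rfl hone, Finset.sum_const, nsmul_eq_mul, mul_one]
  · have hfil : X.filter (fun v => cshift^[d] v = v) = {0} := by
      ext v
      rw [Finset.mem_filter, Finset.mem_singleton]
      constructor
      · rintro ⟨hv, hfx⟩; exact hfix d hd v hv hfx
      · rintro rfl
        refine ⟨h0mem, ?_⟩
        funext i
        rw [cshift_iterate]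
        rfl
    rw [hfil, Finset.card_singleton]
    have hinv0 : invF2 (0 : Fin n → ZMod 2) = 0 := by
      rw [invF2, Finset.card_eq_zero]
      refine Finset.filter_eq_empty_iff.2 fun p _ => ?_
      rintro ⟨-, hc, -⟩
      exact zero_ne_one hc
    rw [hXeq, Finset.sum_insert h0notin, hinv0, Nat.mul_zero, pow_zero,
      Finset.sum_image hinjon]
    have hterm : ∀ j ∈ Finset.range n,
        ζ ^ (d * invF2 (e j)) = ζ ^ (d * invF2 w0) * (ζ ^ (d * w1)) ^ j := by
      intro j _
      have h1 : invF2 (e j) ≡ invF2 w0 + j * w1 [MOD n] := (invF2_iter hn0 w0 j).1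
      have h2 : d * invF2 (e j) ≡ d * invF2 w0 + (d * w1) * j [MOD n] := by
        calc d * invF2 (e j) ≡ d * (invF2 w0 + j * w1) [MOD n] := h1.mul_left d
          _ = d * invF2 w0 + (d * w1) * j := by ring
      rw [hζmod _ _ h2, pow_add]
      congr 1
      rw [pow_mul]
    rw [Finset.sum_congr rfl hterm, ← Finset.mul_sum]
    have hq : (ζ ^ (d * w1)) ≠ 1 := by
      intro hc
      have h1 := (hζprim.pow_eq_one_iff_dvd (d * w1)).1 hc
      exact hd (hcop.dvd_of_dvd_mul_right h1)
    rw [geom_sum_eq hq n]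
    have hqn : (ζ ^ (d * w1)) ^ n = 1 := by
      rw [← pow_mul, mul_comm, pow_mul, hζn, one_pow]
    rw [hqn, sub_self, zero_div, mul_zero, add_zero]
    exact Nat.cast_one
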